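/- arXiv:1107.5016 — 3 statements merged into one kernel-verified Lean document; each statement's English description precedes it below -/
import Mathlib

section
/- Let χ be the character of a representation ρ of a group into SL(2, ℂ), and suppose elements x, y, t satisfy the relations t x t⁻¹ = x y x² and t y t⁻¹ = x⁻¹. If a = χ(x), then χ(y) = a, and a ≠ 1 implies χ(xy) = a/(a-1). -/
lemma tr_aux_stmt8 (A B : Matrix (Fin 2) (Fin 2) ℂ) :
    Matrix.trace (A * B * A) =
      Matrix.trace A * Matrix.trace (A * B) - A.det * Matrix.trace B := by
  simp [Matrix.trace_fin_two, Matrix.mul_apply, Matrix.det_fin_two, Fin.sum_univ_succ]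
  ring

theorem stmt_8 {G : Type*} [Group G] (x y t : G)
    (hx : t * x * t⁻¹ = x * y * x ^ 2) (hy : t * y * t⁻¹ = x⁻¹)
    (ρ : G →* Matrix.SpecialLinearGroup (Fin 2) ℂ)
    (χ : G → ℂ) (hχ : ∀ g, χ g = Matrix.trace ((ρ g : Matrix (Fin 2) (Fin 2) ℂ)))
    (a : ℂ) (ha : a = χ x) :
    χ y = a ∧ (a ≠ 1 → χ (x * y) = a / (a - 1)) := by
  have conj : ∀ g h : G, χ (h * g * h⁻¹) = χ g := by
    intro g h
    rw [hχ, hχ, map_mul, map_mul, map_inv,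
      Matrix.SpecialLinearGroup.coe_mul, Matrix.SpecialLinearGroup.coe_mul,
      Matrix.SpecialLinearGroup.coe_inv, Matrix.trace_mul_cycle,
      Matrix.adjugate_mul, (ρ h).2]
    simp
  have inv_tr : ∀ g : G, χ g⁻¹ = χ g := by
    intro g
    rw [hχ, hχ, map_inv, Matrix.SpecialLinearGroup.coe_inv, Matrix.adjugate_fin_two]
    simp [Matrix.trace_fin_two]
    ring
  have hya : χ y = a := by
    have h1 := conj y t
    rw [hy, inv_tr, ← ha] at h1
    exact h1.symm
  refine ⟨hya, fun hne => ?_⟩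
  have h3 : χ (x * y * x) = χ (x * y) := by
    have h := conj (x * y) t
    rw [show t * (x * y) * t⁻¹ = (t * x * t⁻¹) * (t * y * t⁻¹) by group, hx, hy,
      show x * y * x ^ 2 * x⁻¹ = x * y * x by group] at h
    exact h
  have key : χ (x * y * x) = χ x * χ (x * y) - χ y := by
    rw [hχ (x * y * x), hχ x, hχ (x * y), hχ y, map_mul, map_mul,
      Matrix.SpecialLinearGroup.coe_mul, Matrix.SpecialLinearGroup.coe_mul]
    have := tr_aux_stmt8 (ρ x : Matrix (Fin 2) (Fin 2) ℂ) (ρ y : Matrix (Fin 2) (Fin 2) ℂ)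
    rw [(ρ x).2] at this
    simpa using this
  rw [h3, ← ha, hya] at key
  have hne' : a - 1 ≠ 0 := sub_ne_zero_of_ne hne
  field_simp
  linear_combination -key
end

section
/- Define κ(a, b, c) = a² + b² + c² - abc - 2. Then for every real a ≠ 1, κ(a, a, a/(a-1)) = (a-1)² + (a-1) - 2 + (a-1)⁻¹ + (a-1)⁻², and this quantity is at least -2. -/
/-- `κ(a,b,c) = a² + b² + c² - abc - 2`. -/
def kappa (a b c : ℝ) : ℝ := a ^ 2 + b ^ 2 + c ^ 2 - a * b * c - 2

theorem stmt_9 (a : ℝ) (ha : a ≠ 1) :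
    kappa a a (a / (a - 1))
        = (a - 1) ^ 2 + (a - 1) - 2 + (a - 1)⁻¹ + ((a - 1) ^ 2)⁻¹ ∧
      -2 ≤ kappa a a (a / (a - 1)) := by
  have ht : a - 1 ≠ 0 := sub_ne_zero.mpr ha
  have heq : kappa a a (a / (a - 1))
      = (a - 1) ^ 2 + (a - 1) - 2 + (a - 1)⁻¹ + ((a - 1) ^ 2)⁻¹ := by
    unfold kappa; field_simp; ring
  refine ⟨heq, ?_⟩
  rw [heq]
  have h1 : (0:ℝ) < (a - 1) ^ 2 := by positivity
  rw [← sub_nonneg]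
  have key : ((a - 1) ^ 2 + (a - 1) - 2 + (a - 1)⁻¹ + ((a - 1) ^ 2)⁻¹ - (-2)) * (a - 1) ^ 2
      = ((a - 1) + 1) ^ 2 * ((a - 1) ^ 2 - (a - 1) + 1) := by
    field_simp; ring
  nlinarith [sq_nonneg ((a-1)+1), sq_nonneg ((a-1) - 1/2), sq_nonneg (((a-1)+1) * (a-1))]
end

section
/- Define κ(a, b, c) = a² + b² + c² - abc - 2. For real a ≠ 1, the triple (a, a, κ(a, a, a/(a-1))) lies in [-2, 2]³ if and only if -(√5 + 1)/2 ≤ a ≤ (√5 - 1)/2 or a = 2. -/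
theorem stmt_10 (a : ℝ) (ha : a ≠ 1) :
    (a ∈ Set.Icc (-2 : ℝ) 2 ∧ kappa a a (a / (a - 1)) ∈ Set.Icc (-2 : ℝ) 2)
      ↔ ((-(Real.sqrt 5 + 1) / 2 ≤ a ∧ a ≤ (Real.sqrt 5 - 1) / 2) ∨ a = 2) := by
  have hd : a - 1 ≠ 0 := sub_ne_zero.mpr ha
  have hd2 : (0:ℝ) < (a - 1) ^ 2 := by positivity
  have hs : Real.sqrt 5 ^ 2 = 5 := Real.sq_sqrt (by norm_num)
  have hs0 : (2:ℝ) ≤ Real.sqrt 5 := by nlinarith [Real.sqrt_nonneg 5]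
  have hs3 : Real.sqrt 5 ≤ 3 := by nlinarith [Real.sqrt_nonneg 5]
  have hk2 : kappa a a (a / (a - 1)) - 2 = (a - 2) ^ 2 * (a ^ 2 + a - 1) / (a - 1) ^ 2 := by
    unfold kappa; field_simp; ring
  have hk2' : kappa a a (a / (a - 1)) + 2 = a ^ 2 * (a ^ 2 - 3 * a + 3) / (a - 1) ^ 2 := by
    unfold kappa; field_simp; ring
  simp only [Set.mem_Icc]
  constructor
  · rintro ⟨⟨h1, h2⟩, h3, h4⟩
    by_cases h2' : a = 2
    · right; exact h2'
    · left
      have hU : (a - 2) ^ 2 * (a ^ 2 + a - 1) / (a - 1) ^ 2 ≤ 0 := by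
        rw [← hk2]; linarith
      have hP : (a - 2) ^ 2 * (a ^ 2 + a - 1) ≤ 0 := by
        have := (div_nonpos_iff.mp hU)
        rcases this with ⟨h, h'⟩ | ⟨h, h'⟩
        · nlinarith
        · exact h
      have hne : (0:ℝ) < (a - 2) ^ 2 := by
        have : a - 2 ≠ 0 := sub_ne_zero.mpr h2'
        positivity
      have hq : a ^ 2 + a - 1 ≤ 0 := by nlinarith
      constructor
      · nlinarith [sq_nonneg (2 * a + 1 + Real.sqrt 5)]
      · nlinarith [sq_nonneg (2 * a + 1 - Real.sqrt 5)]
  · rintro (⟨h1, h2⟩ | h)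
    · have hq : a ^ 2 + a - 1 ≤ 0 := by nlinarith
      have ha1 : -2 ≤ a := by nlinarith
      have ha2 : a ≤ 2 := by nlinarith
      refine ⟨⟨ha1, ha2⟩, ?_, ?_⟩
      · nlinarith [hk2', div_nonneg (by nlinarith [sq_nonneg a, sq_nonneg (a - 3/2)] :
          (0:ℝ) ≤ a ^ 2 * (a ^ 2 - 3 * a + 3)) (le_of_lt hd2)]
      · nlinarith [hk2, div_nonpos_of_nonpos_of_nonneg
          (by nlinarith [sq_nonneg (a - 2)] : (a - 2) ^ 2 * (a ^ 2 + a - 1) ≤ 0)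
          (le_of_lt hd2)]
    · subst h
      norm_num [kappa]
end
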